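/- For c¹, c² ∈ ℝ with p + c¹ > 0, define k*(c¹, c²) = ( −δε − (c̄ − c²)λ/(r+δ) + √( (δε − (c̄ − c²)λ/(r+δ))² + 4δλh(p + c¹)/(r+δ) ) ) / (2δ). Then k* is strictly increasing in c¹ (for fixed c²) and strictly increasing in c² (for fixed c¹). -/
import Mathlib


/-- The equilibrium capacity when the subsidy to production has a part `c¹` proportional to
the spot price and a constant aggregated part `c²`. -/
noncomputable def kstarSub (r δ lam h p ε cbar c1 c2 : ℝ) : ℝ :=
  (-(δ * ε) - (cbar - c2) * lam / (r + δ)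
      + Real.sqrt ((δ * ε - (cbar - c2) * lam / (r + δ)) ^ 2
          + 4 * δ * lam * h * (p + c1) / (r + δ)))
    / (2 * δ)

/-- `k*(c¹, c²)` is strictly increasing in `c¹` (for fixed `c²`) and strictly increasing
in `c²` (for fixed `c¹`), on the domain `p + c¹ > 0`. -/
theorem kstarSub_strictMono
    (r δ lam h p ε cbar : ℝ)
    (hr : 0 < r) (hδ : 0 < δ) (hlam : 0 < lam) (hh : 0 < h) (hp : 0 < p) (hε : 0 < ε) :
    (∀ c1 c1' c2 : ℝ, 0 < p + c1 → 0 < p + c1' → c1 < c1' →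
      kstarSub r δ lam h p ε cbar c1 c2 < kstarSub r δ lam h p ε cbar c1' c2) ∧
    (∀ c1 c2 c2' : ℝ, 0 < p + c1 → c2 < c2' →
      kstarSub r δ lam h p ε cbar c1 c2 < kstarSub r δ lam h p ε cbar c1 c2') := by
  have hrδ : 0 < r + δ := by linarith
  constructor
  · intro c1 c1' c2 h1 h1' hlt
    unfold kstarSub
    have hA : (0:ℝ) ≤ (δ * ε - (cbar - c2) * lam / (r + δ)) ^ 2
        + 4 * δ * lam * h * (p + c1) / (r + δ) := by
      have : 0 ≤ 4 * δ * lam * h * (p + c1) / (r + δ) := by positivity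
      nlinarith [sq_nonneg (δ * ε - (cbar - c2) * lam / (r + δ))]
    have hlt' : (δ * ε - (cbar - c2) * lam / (r + δ)) ^ 2
          + 4 * δ * lam * h * (p + c1) / (r + δ)
        < (δ * ε - (cbar - c2) * lam / (r + δ)) ^ 2
          + 4 * δ * lam * h * (p + c1') / (r + δ) := by
      have : 4 * δ * lam * h * (p + c1) / (r + δ) < 4 * δ * lam * h * (p + c1') / (r + δ) := by
        apply div_lt_div_of_pos_right ?_ hrδ
        nlinarith [mul_pos (mul_pos (mul_pos (by linarith : (0:ℝ) < 4 * δ) hlam) hh) (sub_pos.mpr hlt)]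
      linarith
    have hs := Real.sqrt_lt_sqrt hA hlt'
    have h2δ : 0 < 2 * δ := by positivity
    apply div_lt_div_of_pos_right ?_ h2δ
    linarith
  · intro c1 c2 c2' h1 hlt
    unfold kstarSub
    set a := δ * ε with ha
    set b := (cbar - c2) * lam / (r + δ) with hb
    set b' := (cbar - c2') * lam / (r + δ) with hb'
    set C := 4 * δ * lam * h * (p + c1) / (r + δ) with hC
    have hCpos : 0 < C := by rw [hC]; positivity
    have hd : b' < b := by
      rw [hb, hb']
      apply div_lt_div_of_pos_right ?_ hrδ
      nlinarith
    have hA' : (0:ℝ) ≤ (a - b') ^ 2 + C := by nlinarith [sq_nonneg (a - b')]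
    have hs' : Real.sqrt ((a - b') ^ 2 + C) > |a - b'| := by
      have := Real.sqrt_lt_sqrt (sq_nonneg (a - b')) (by linarith : (a-b')^2 < (a-b')^2 + C)
      rwa [Real.sqrt_sq_eq_abs] at this
    set s' := Real.sqrt ((a - b') ^ 2 + C) with hs'def
    have hs'nn : 0 ≤ s' := Real.sqrt_nonneg _
    -- key: sqrt((a-b)^2+C) < s' + (b - b')
    have hkey : Real.sqrt ((a - b) ^ 2 + C) < s' + (b - b') := by
      have hsq : (a - b) ^ 2 + C < (s' + (b - b')) ^ 2 := by
        have hs'sq : s' ^ 2 = (a - b') ^ 2 + C := Real.sq_sqrt hA'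
        have habs : -(a - b') < s' := by
          have := neg_abs_le (a - b')
          linarith [hs', (neg_abs_le (a - b'))]
        nlinarith [hs', abs_nonneg (a - b')]
      have hnn : 0 ≤ s' + (b - b') := by linarith
      calc Real.sqrt ((a - b) ^ 2 + C) < Real.sqrt ((s' + (b - b')) ^ 2) := by
            apply Real.sqrt_lt_sqrt (by nlinarith [sq_nonneg (a-b)]) hsq
        _ = s' + (b - b') := by rw [Real.sqrt_sq hnn]
    have h2δ : 0 < 2 * δ := by positivity
    apply div_lt_div_of_pos_right ?_ h2δ
    linarith
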